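/- For every integer d2 ≥ 4, in the game i-MARK({1},{2,d2}), convergence occurs in at most 4·d2 + 3 steps at every starting position n ∈ ℕ. -/
import Mathlib


/-- The minimum excludant of a set of naturals. -/
noncomputable def mex (T : Set ℕ) : ℕ := sInf {k : ℕ | k ∉ T}

/-- The set of followers of position `n` in the game i-MARK(S,D):
`n - s` for `s ∈ S` with `0 < s ≤ n`, and `n / d` for `d ∈ D` with `2 ≤ d`, `0 < n`, `d ∣ n`. -/
def followers (S D : Finset ℕ) (n : ℕ) : Finset ℕ :=
  ((S.filter fun s => 0 < s ∧ s ≤ n).image fun s => n - s) ∪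
  ((D.filter fun d => 2 ≤ d ∧ 0 < n ∧ d ∣ n).image fun d => n / d)

theorem followers_lt {S D : Finset ℕ} {n m : ℕ} (h : m ∈ followers S D n) : m < n := by
  simp only [followers, Finset.mem_union, Finset.mem_image, Finset.mem_filter] at h
  rcases h with ⟨s, ⟨-, hs, hsn⟩, rfl⟩ | ⟨d, ⟨-, hd, hn, -⟩, rfl⟩
  · omega
  · exact Nat.div_lt_self hn (by omega)

/-- The Sprague–Grundy function of i-MARK(S,D). -/
noncomputable def grundy (S D : Finset ℕ) : ℕ → ℕ
  | n => mex ↑((followers S D n).attach.image fun m => grundy S D m.1)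
decreasing_by exact followers_lt m.2

/-- The number of followers of position `n` in i-MARK(S,D) (for positive `S` and `D` with
elements `≥ 2`): `φ(0) = 0` and `φ(n) = #{s ∈ S : s ≤ n} + #{d ∈ D : d ∣ n}` for `n > 0`. -/
def numFollowers (S D : Finset ℕ) (n : ℕ) : ℕ :=
  if n = 0 then 0 else (S.filter fun s => s ≤ n).card + (D.filter fun d => d ∣ n).card

/-- `σ : ℕ → ℕ` is a guess seed for starting position `n` in i-MARK(S,D) if
`σ i ≤ φ(i)` for all `n ≤ i < n + max S` (values of `σ` outside this window are irrelevant). -/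
def IsGuessSeed (S D : Finset ℕ) (n : ℕ) (σ : ℕ → ℕ) : Prop :=
  ∀ i, n ≤ i → i < n + S.sup id → σ i ≤ numFollowers S D i

/-- The guess sequence generated by seed `σ` from starting position `n`: it equals `σ` on
`[n, n + max S)`, and from `n + max S` on it is computed by the mex rule, using guessed values
for subtraction followers and true Grundy values for division followers. -/
noncomputable def guessSeq (S D : Finset ℕ) (n : ℕ) (σ : ℕ → ℕ) : ℕ → ℕ
  | m =>
    if m < n + S.sup id then σ m
    else
      mex ((↑((S.filter fun t => 0 < t ∧ t ≤ m).attach.image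
              fun t => guessSeq S D n σ (m - t.1)) : Set ℕ) ∪
        {g | ∃ d ∈ D, 2 ≤ d ∧ 0 < m ∧ d ∣ m ∧ g = grundy S D (m / d)})
decreasing_by
  have ht := t.2
  simp only [Finset.mem_filter] at ht
  omega

/-- Convergence occurs in `c` steps at starting position `n`: any two guess sequences from `n`
agree on all positions `m` with `n + c ≤ m < n + c + max S`. -/
def ConvergesIn (S D : Finset ℕ) (n c : ℕ) : Prop :=
  ∀ σ σ' : ℕ → ℕ, IsGuessSeed S D n σ → IsGuessSeed S D n σ' →
    ∀ m, n + c ≤ m → m < n + c + S.sup id → guessSeq S D n σ m = guessSeq S D n σ' m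

/-! ### Auxiliary lemmas -/

lemma mex_eq_zero {U : Set ℕ} (h : 0 ∉ U) : mex U = 0 :=
  Nat.sInf_eq_zero.mpr (Or.inl h)

lemma mex_ne_zero {U : Set ℕ} (h0 : 0 ∈ U) (hne : ∃ k, k ∉ U) : mex U ≠ 0 := by
  intro h
  have hmem : sInf {k : ℕ | k ∉ U} ∈ {k : ℕ | k ∉ U} := Nat.sInf_mem hne
  rw [show sInf {k : ℕ | k ∉ U} = mex U from rfl, h] at hmem
  exact hmem h0

lemma followers_odd {d₂ j : ℕ} (hj : 1 ≤ j) (h2 : ¬ 2 ∣ j) (hd : ¬ d₂ ∣ j) :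
    followers {1} {2, d₂} j = {j - 1} := by
  ext m
  simp only [followers, Finset.mem_union, Finset.mem_image, Finset.mem_filter,
    Finset.mem_singleton, Finset.mem_insert]
  constructor
  · rintro (⟨s, ⟨hs1, -, -⟩, rfl⟩ | ⟨d, ⟨hd1, -, -, hdvd⟩, rfl⟩)
    · omega
    · rcases hd1 with rfl | rfl
      · exact absurd hdvd h2
      · exact absurd hdvd hd
  · rintro rfl
    exact Or.inl ⟨1, ⟨rfl, by omega⟩, rfl⟩

lemma grundy_odd {d₂ j : ℕ} (hj : 1 ≤ j) (h2 : ¬ 2 ∣ j) (hd : ¬ d₂ ∣ j) :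
    grundy {1} {2, d₂} j = mex {grundy {1} {2, d₂} (j - 1)} := by
  rw [grundy, followers_odd hj h2 hd]
  congr 1
  ext x
  simp [Finset.mem_image, Finset.mem_attach, eq_comm]

/-- The set of Grundy values of division followers of `m`. -/
def DivS (d₂ m : ℕ) : Set ℕ :=
  {g | ∃ d ∈ ({2, d₂} : Finset ℕ), 2 ≤ d ∧ 0 < m ∧ d ∣ m ∧ g = grundy {1} {2, d₂} (m / d)}

lemma guessSeq_eq (d₂ n : ℕ) (σ : ℕ → ℕ) (m : ℕ) (hm : n + 1 ≤ m) :
    guessSeq {1} {2, d₂} n σ m =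
      mex ({guessSeq {1} {2, d₂} n σ (m - 1)} ∪ DivS d₂ m) := by
  rw [guessSeq]
  have hsup : ({1} : Finset ℕ).sup id = 1 := rfl
  rw [hsup, if_neg (by omega)]
  congr 1
  rw [DivS]
  congr 1
  have hfil : ({1} : Finset ℕ).filter (fun t => 0 < t ∧ t ≤ m) = {1} := by
    rw [Finset.filter_singleton, if_pos ⟨by omega, by omega⟩]
  rw [hfil]
  ext x
  simp [Finset.mem_image, Finset.mem_attach, eq_comm]

lemma DivS_empty {d₂ m : ℕ} (h2 : ¬ 2 ∣ m) (hd : ¬ d₂ ∣ m) : DivS d₂ m = ∅ := by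
  ext g
  simp only [DivS, Set.mem_setOf_eq, Set.mem_empty_iff_false, iff_false]
  rintro ⟨d, hdmem, -, -, hdvd, -⟩
  rcases Finset.mem_insert.mp hdmem with rfl | hdm
  · exact h2 hdvd
  · rw [Finset.mem_singleton.mp hdm] at hdvd
    exact hd hdvd

lemma DivS_bdd {d₂ m g : ℕ} (hg : g ∈ DivS d₂ m) :
    g ≤ grundy {1} {2, d₂} (m / 2) + grundy {1} {2, d₂} (m / d₂) := by
  obtain ⟨d, hdmem, -, -, -, rfl⟩ := hg
  rcases Finset.mem_insert.mp hdmem with rfl | hdm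
  · omega
  · rw [Finset.mem_singleton.mp hdm]; omega

lemma DivS_zero_mem {d₂ m : ℕ} (hm : 0 < m) (h2 : 2 ∣ m)
    (hg : grundy {1} {2, d₂} (m / 2) = 0) : 0 ∈ DivS d₂ m :=
  ⟨2, by simp, le_refl 2, hm, h2, hg.symm⟩

/-- At a "killer" position `p`, every guess sequence takes the value `0`. -/
lemma guessSeq_kill {d₂ n : ℕ} (σ : ℕ → ℕ) {p : ℕ} (hp : n + 2 ≤ p)
    (hp2 : ¬ 2 ∣ p) (hpd : ¬ d₂ ∣ p) (h0 : 0 ∈ DivS d₂ (p - 1)) :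
    guessSeq {1} {2, d₂} n σ p = 0 := by
  rw [guessSeq_eq d₂ n σ p (by omega), DivS_empty hp2 hpd, Set.union_empty]
  apply mex_eq_zero
  simp only [Set.mem_singleton_iff]
  intro heq
  have hne : guessSeq {1} {2, d₂} n σ (p - 1) ≠ 0 := by
    rw [guessSeq_eq d₂ n σ (p - 1) (by omega)]
    apply mex_ne_zero (Set.mem_union_right _ h0)
    refine ⟨guessSeq {1} {2, d₂} n σ (p - 1 - 1) +
      grundy {1} {2, d₂} ((p - 1) / 2) + grundy {1} {2, d₂} ((p - 1) / d₂) + 1, ?_⟩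
    rintro (hmem | hmem)
    · simp only [Set.mem_singleton_iff] at hmem; omega
    · have := DivS_bdd hmem; omega
  exact hne heq.symm

/-- Once two guess sequences agree at a position `≥ n + 1`, they agree from then on. -/
lemma guessSeq_prop {d₂ n : ℕ} (σ σ' : ℕ → ℕ) {p : ℕ} (hp : n + 1 ≤ p)
    (hbase : guessSeq {1} {2, d₂} n σ p = guessSeq {1} {2, d₂} n σ' p) :
    ∀ m, p ≤ m → guessSeq {1} {2, d₂} n σ m = guessSeq {1} {2, d₂} n σ' m := by
  intro m hm
  induction m, hm using Nat.le_induction with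
  | base => exact hbase
  | succ m hm ih =>
    rw [guessSeq_eq d₂ n σ (m + 1) (by omega), guessSeq_eq d₂ n σ' (m + 1) (by omega)]
    have : guessSeq {1} {2, d₂} n σ (m + 1 - 1) = guessSeq {1} {2, d₂} n σ' (m + 1 - 1) := by
      simpa using ih
    rw [this]

/-- In i-MARK({1},{2,d₂}) with `d₂ ≥ 4`, convergence occurs in at most `4·d₂ + 3` steps
at every starting position. -/
theorem imark_one_two_d2_convergence (d₂ : ℕ) (h : 4 ≤ d₂) (n : ℕ) :
    ∃ c' : ℕ, 1 ≤ c' ∧ c' ≤ 4 * d₂ + 3 ∧ ConvergesIn {1} {2, d₂} n c' := by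
  refine ⟨4 * d₂ + 3, by omega, le_refl _, ?_⟩
  -- choose q with n + 3 ≤ 4 d₂ q + 2 ≤ n + 4 d₂ + 2
  obtain ⟨q, hq1, hq2⟩ : ∃ q, n + 3 ≤ 4 * d₂ * q + 2 ∧ 4 * d₂ * q + 2 ≤ n + 4 * d₂ + 2 := by
    have h1 : 4 * d₂ * ((n + 1) / (4 * d₂)) + (n + 1) % (4 * d₂) = n + 1 :=
      Nat.div_add_mod _ _
    have h2 : (n + 1) % (4 * d₂) < 4 * d₂ := Nat.mod_lt _ (by omega)
    rcases Nat.eq_zero_or_pos ((n + 1) % (4 * d₂)) with h0 | h0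
    · exact ⟨(n + 1) / (4 * d₂), by omega, by omega⟩
    · refine ⟨(n + 1) / (4 * d₂) + 1, ?_, ?_⟩ <;>
      · have hmul : 4 * d₂ * ((n + 1) / (4 * d₂) + 1)
            = 4 * d₂ * ((n + 1) / (4 * d₂)) + 4 * d₂ := by ring
        omega
    -- the killer pair: j = 2 d₂ q + 1, w = 2 j
  set t : ℕ := d₂ * q with ht
  have ht4 : 4 * d₂ * q = 4 * t := by rw [ht]; ring
  have htd : d₂ ∣ 4 * t := ⟨4 * q, by rw [ht]; ring⟩
  set j : ℕ := 2 * t + 1 with hj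
  have hw1 : n + 3 ≤ 2 * j := by omega
  have hw2 : 2 * j ≤ n + 4 * d₂ + 2 := by omega
  have hj2 : ¬ 2 ∣ j := by omega
  have hjd : ¬ d₂ ∣ j := by
    intro hdvd
    have h1 : d₂ ∣ 2 * t := ⟨2 * q, by rw [ht]; ring⟩
    have := Nat.dvd_sub hdvd h1
    have h1' : j - 2 * t = 1 := by omega
    rw [h1'] at this
    have := Nat.le_of_dvd one_pos this
    omega
  have hwm1 : ¬ d₂ ∣ (2 * j - 1) := by
    intro hdvd
    have := Nat.dvd_sub hdvd htd
    have h1' : 2 * j - 1 - 4 * t = 1 := by omega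
    rw [h1'] at this
    have := Nat.le_of_dvd one_pos this
    omega
  have hwp1 : ¬ d₂ ∣ (2 * j + 1) := by
    intro hdvd
    have := Nat.dvd_sub hdvd htd
    have h1' : 2 * j + 1 - 4 * t = 3 := by omega
    rw [h1'] at this
    have := Nat.le_of_dvd (by omega) this
    omega
  -- the killer position p
  have hgj : grundy {1} {2, d₂} j = mex {grundy {1} {2, d₂} (j - 1)} :=
    grundy_odd (by omega) hj2 hjd
  obtain ⟨p, hp1, hp2, hpo, hpd, h0⟩ :
      ∃ p, n + 2 ≤ p ∧ p ≤ n + (4 * d₂ + 3) ∧ ¬ 2 ∣ p ∧ ¬ d₂ ∣ p ∧ 0 ∈ DivS d₂ (p - 1) := by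
    by_cases hg0 : grundy {1} {2, d₂} (j - 1) = 0
    · refine ⟨2 * j - 1, by omega, by omega, by omega, hwm1, ?_⟩
      have hdiv : (2 * j - 1 - 1) / 2 = j - 1 := by omega
      exact DivS_zero_mem (by omega) (by omega) (by rw [hdiv]; exact hg0)
    · refine ⟨2 * j + 1, by omega, by omega, by omega, hwp1, ?_⟩
      have hdiv : (2 * j + 1 - 1) / 2 = j := by omega
      have hgj0 : grundy {1} {2, d₂} j = 0 := by
        rw [hgj]
        exact mex_eq_zero (fun hx => hg0 (Set.mem_singleton_iff.mp hx).symm)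
      exact DivS_zero_mem (by omega) (by omega) (by rw [hdiv]; exact hgj0)
  intro σ σ' _ _ m hm1 hm2
  have hsup : ({1} : Finset ℕ).sup id = 1 := rfl
  rw [hsup] at hm2
  have hmeq : m = n + (4 * d₂ + 3) := by omega
  have hbase : guessSeq {1} {2, d₂} n σ p = guessSeq {1} {2, d₂} n σ' p := by
    rw [guessSeq_kill σ hp1 hpo hpd h0, guessSeq_kill σ' hp1 hpo hpd h0]
  exact guessSeq_prop σ σ' (by omega) hbase m (by omega)
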